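/- For nonnegative reals b_{ij} (i,j ∈ [n]) and integers 2 ≤ k ≤ K, we have ∑_i (∑_j b_{ij}^k)^{K/k} ≤ (∑_i (∑_j b_{ij}^2)^{K/2})^{2/k} · (∑_i max_j b_{ij}^K)^{(k-2)/k}. -/

import Mathlib

open Real

/-- For nonnegative `b_{ij}` and integers `2 ≤ k ≤ K`,
`∑_i (∑_j b_{ij}^k)^{K/k} ≤ (∑_i (∑_j b_{ij}^2)^{K/2})^{2/k} (∑_i max_j b_{ij}^K)^{(k-2)/k}`. -/
theorem stmt2 {n : ℕ} (k K : ℕ) (hk : 2 ≤ k) (hK : k ≤ K)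
    (b : Matrix (Fin n) (Fin n) ℝ) (hb : ∀ i j, 0 ≤ b i j) :
    ∑ i, (∑ j, b i j ^ k) ^ ((K : ℝ) / k) ≤
      (∑ i, (∑ j, b i j ^ 2) ^ ((K : ℝ) / 2)) ^ (2 / (k : ℝ)) *
        (∑ i, ⨆ j, b i j ^ K) ^ (((k : ℝ) - 2) / k) := by
  rcases eq_or_lt_of_le hk with hk2 | hk2
  · -- k = 2
    subst hk2
    have hS : (0 : ℝ) ≤ ∑ i, (∑ j, b i j ^ 2) ^ ((K : ℝ) / 2) :=
      Finset.sum_nonneg fun i _ => rpow_nonneg (Finset.sum_nonneg fun j _ => sq_nonneg _) _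
    simp only [Nat.cast_ofNat, sub_self, zero_div, rpow_zero, mul_one]
    rw [show (2 : ℝ) / 2 = 1 by norm_num, rpow_one]
  · -- k > 2
    have hn0 : 0 < (k : ℝ) := by positivity
    have hk2' : (2 : ℝ) < k := by exact_mod_cast hk2
    set s : Fin n → ℝ := fun i => ⨆ j, b i j with hs
    have hsnn : ∀ i, 0 ≤ s i := by
      intro i
      rcases Nat.eq_zero_or_pos n with h | h
      · subst h
        simp [hs, Real.iSup_of_isEmpty]
      · have : Nonempty (Fin n) := ⟨⟨0, h⟩⟩
        exact le_trans (hb i (Classical.arbitrary _))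
          (le_ciSup (Set.Finite.bddAbove (Set.finite_range _)) _)
    have hsup : ∀ i, (⨆ j, b i j ^ K) = s i ^ (K : ℕ) := by
      intro i
      rcases Nat.eq_zero_or_pos n with h | h
      · subst h
        have hK0 : K ≠ 0 := by omega
        simp [hs, Real.iSup_of_isEmpty, zero_pow hK0]
      · have : Nonempty (Fin n) := ⟨⟨0, h⟩⟩
        apply le_antisymm
        · exact ciSup_le fun j => pow_le_pow_left₀ (hb i j)
            (le_ciSup (Set.Finite.bddAbove (Set.finite_range _)) j) K
        · obtain ⟨j, hj⟩ := exists_eq_ciSup_of_finite (f := b i)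
          rw [hs]
          calc (⨆ j, b i j) ^ K = b i j ^ K := by rw [hj]
            _ ≤ ⨆ j, b i j ^ K := le_ciSup (f := fun j => b i j ^ K) (Set.Finite.bddAbove (Set.finite_range _)) j
    -- pointwise bound
    have hpt : ∀ i, (∑ j, b i j ^ k) ≤ (∑ j, b i j ^ 2) * s i ^ (k - 2) := by
      intro i
      rw [Finset.sum_mul]
      refine Finset.sum_le_sum fun j _ => ?_
      have : b i j ^ k = b i j ^ 2 * b i j ^ (k - 2) := by
        rw [← pow_add]; congr 1; omega
      rw [this]
      exact mul_le_mul_of_nonneg_left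
        (pow_le_pow_left₀ (hb i j)
          (le_ciSup (Set.Finite.bddAbove (Set.finite_range _)) j) _)
        (sq_nonneg _)
    -- apply Hölder
    have hpq : Real.HolderConjugate ((k : ℝ) / 2) ((k : ℝ) / (k - 2)) := by
      rw [Real.holderConjugate_iff]; constructor
      · rw [lt_div_iff₀ (by norm_num)]; linarith
      · field_simp; ring
    set x : Fin n → ℝ := fun i => ∑ j, b i j ^ 2 with hx
    have hxnn : ∀ i, 0 ≤ x i := fun i => Finset.sum_nonneg fun j _ => sq_nonneg _
    calc ∑ i, (∑ j, b i j ^ k) ^ ((K : ℝ) / k)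
        ≤ ∑ i, (x i ^ ((K : ℝ) / k)) * (s i ^ (((k : ℝ) - 2) * K / k)) := by
          refine Finset.sum_le_sum fun i _ => ?_
          have h1 : (∑ j, b i j ^ k) ^ ((K : ℝ) / k)
              ≤ (x i * s i ^ (k - 2)) ^ ((K : ℝ) / k) :=
            rpow_le_rpow (Finset.sum_nonneg fun j _ => pow_nonneg (hb i j) _)
              (hpt i) (by positivity)
          refine h1.trans_eq ?_
          rw [Real.mul_rpow (hxnn i) (pow_nonneg (hsnn i) _), ← Real.rpow_natCast (s i) (k - 2),
            ← Real.rpow_mul (hsnn i)]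
          congr 2
          have : ((k - 2 : ℕ) : ℝ) = (k : ℝ) - 2 := by
            push_cast [Nat.cast_sub (by omega : 2 ≤ k)]; ring
          rw [this]; ring
      _ ≤ (∑ i, (x i ^ ((K : ℝ) / k)) ^ ((k : ℝ) / 2)) ^ (1 / ((k : ℝ) / 2)) *
            (∑ i, (s i ^ (((k : ℝ) - 2) * K / k)) ^ ((k : ℝ) / (k - 2))) ^ (1 / ((k : ℝ) / (k - 2))) :=
          Real.inner_le_Lp_mul_Lq_of_nonneg Finset.univ hpq
            (fun i _ => rpow_nonneg (hxnn i) _) (fun i _ => rpow_nonneg (hsnn i) _)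
      _ = (∑ i, (∑ j, b i j ^ 2) ^ ((K : ℝ) / 2)) ^ (2 / (k : ℝ)) *
            (∑ i, ⨆ j, b i j ^ K) ^ (((k : ℝ) - 2) / k) := by
          have hk2ne : (k : ℝ) - 2 ≠ 0 := by linarith
          congr 1
          · congr 1
            · refine Finset.sum_congr rfl fun i _ => ?_
              rw [← Real.rpow_mul (hxnn i)]
              congr 1
              field_simp
            · rw [one_div_div]
          · congr 1
            · refine Finset.sum_congr rfl fun i _ => ?_
              rw [← Real.rpow_mul (hsnn i), hsup i, ← Real.rpow_natCast (s i) K]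
              congr 1
              field_simp
            · rw [one_div_div]
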